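/- Combining the bipartition upper bound and the max-degree lower bound: if G, H are bipartite graphs with parts (A_G, B_G) and (A_H, B_H), no isolated vertices, and 1/(Δ(G)+Δ(H)+1) ≥ (|A_G|/(|A_G|+|B_G|))·(|A_H|/(|A_H|+|B_H|)), then γ(G □ H) ≥ γ(G)·γ(H). -/

import Mathlib

def IsDominatingSet {V : Type*} (G : SimpleGraph V) (D : Set V) : Prop :=
  ∀ v, v ∈ D ∨ ∃ u ∈ D, G.Adj u v

noncomputable def domNum {V : Type*} (G : SimpleGraph V) [Fintype V] : ℕ :=
  sInf {n | ∃ D : Finset V, IsDominatingSet G ↑D ∧ D.card = n}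

noncomputable def maxDeg {V : Type*} (G : SimpleGraph V) [Fintype V] : ℕ :=
  Finset.univ.sup fun v => (G.neighborSet v).ncard

def IsBipartition {V : Type*} (G : SimpleGraph V) (A B : Finset V) : Prop :=
  Disjoint A B ∧ (∀ v, v ∈ A ∨ v ∈ B) ∧
    ∀ u v, G.Adj u v → (u ∈ A ∧ v ∈ B) ∨ (u ∈ B ∧ v ∈ A)

lemma aux_ncard_le_maxDeg {V : Type*} [Fintype V] (G : SimpleGraph V) (v : V) :
    (G.neighborSet v).ncard ≤ maxDeg G := by
  exact Finset.le_sup (f := fun v => (G.neighborSet v).ncard) (Finset.mem_univ v)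

lemma aux_card_le_domNum_mul {V : Type*} [Fintype V] (G : SimpleGraph V) :
    Fintype.card V ≤ domNum G * (maxDeg G + 1) := by
  classical
  have hne : {n | ∃ D : Finset V, IsDominatingSet G ↑D ∧ D.card = n}.Nonempty :=
    ⟨(Finset.univ : Finset V).card, Finset.univ, fun v => Or.inl (by simp), rfl⟩
  obtain ⟨D, hD, hcard⟩ := Nat.sInf_mem hne
  have hsub : (Finset.univ : Finset V) ⊆
      D.biUnion (fun u => insert u (G.neighborFinset u)) := by
    intro v _
    rcases hD v with h | ⟨u, hu, hadj⟩
    · exact Finset.mem_biUnion.2 ⟨v, h, Finset.mem_insert_self _ _⟩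
    · exact Finset.mem_biUnion.2 ⟨u, hu, Finset.mem_insert.2 (Or.inr
        ((G.mem_neighborFinset u v).2 hadj))⟩
  calc Fintype.card V = (Finset.univ : Finset V).card := (Finset.card_univ).symm
    _ ≤ (D.biUnion (fun u => insert u (G.neighborFinset u))).card :=
        Finset.card_le_card hsub
    _ ≤ ∑ u ∈ D, (insert u (G.neighborFinset u)).card := Finset.card_biUnion_le
    _ ≤ ∑ _u ∈ D, (maxDeg G + 1) := by
        refine Finset.sum_le_sum fun u _ => ?_
        have h1 : (insert u (G.neighborFinset u)).card ≤ (G.neighborFinset u).card + 1 :=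
          Finset.card_insert_le _ _
        have h2 : (G.neighborSet u).ncard = (G.neighborFinset u).card := by
          rw [G.neighborFinset_def, Set.ncard_eq_toFinset_card']
        have h3 := aux_ncard_le_maxDeg G u
        omega
    _ = D.card * (maxDeg G + 1) := by rw [Finset.sum_const, smul_eq_mul]
    _ = domNum G * (maxDeg G + 1) := by rw [hcard]; rfl


lemma aux_ncard_eq_degree {V : Type*} [Fintype V] (G : SimpleGraph V) [DecidableRel G.Adj]
    (v : V) : (G.neighborSet v).ncard = G.degree v := by
  simp [SimpleGraph.degree, SimpleGraph.neighborFinset_def, Set.ncard_eq_toFinset_card']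

lemma aux_maxDeg_boxProd {V W : Type*} [Fintype V] [Fintype W]
    (G : SimpleGraph V) (H : SimpleGraph W) :
    maxDeg (G □ H) ≤ maxDeg G + maxDeg H := by
  classical
  refine Finset.sup_le fun x _ => ?_
  rw [aux_ncard_eq_degree, SimpleGraph.degree_boxProd]
  have h1 : G.degree x.1 ≤ maxDeg G := by
    rw [← aux_ncard_eq_degree]; exact aux_ncard_le_maxDeg G x.1
  have h2 : H.degree x.2 ≤ maxDeg H := by
    rw [← aux_ncard_eq_degree]; exact aux_ncard_le_maxDeg H x.2
  omega

lemma aux_domNum_le_card {V : Type*} [Fintype V] (G : SimpleGraph V) (A B : Finset V)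
    (hbip : IsBipartition G A B) (hiso : ∀ v : V, ∃ u, G.Adj v u) :
    domNum G ≤ A.card := by
  apply Nat.sInf_le
  refine ⟨A, fun v => ?_, rfl⟩
  rcases hbip.2.1 v with hA | hB
  · exact Or.inl (by simpa using hA)
  · obtain ⟨u, hadj⟩ := hiso v
    rcases hbip.2.2 v u hadj with ⟨hvA, _⟩ | ⟨_, huA⟩
    · exact (Finset.disjoint_left.1 hbip.1 hvA hB).elim
    · exact Or.inr ⟨u, by simpa using huA, hadj.symm⟩

lemma aux_domNum_zero {V : Type*} [Fintype V] (G : SimpleGraph V) (h : IsEmpty V) :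
    domNum G = 0 :=
  Nat.eq_zero_of_le_zero (Nat.sInf_le ⟨∅, fun v => (h.false v).elim, by simp⟩)

theorem stmt6 {V W : Type*} [Fintype V] [Fintype W]
    (G : SimpleGraph V) (H : SimpleGraph W)
    (AG BG : Finset V) (AH BH : Finset W)
    (hGbip : IsBipartition G AG BG) (hHbip : IsBipartition H AH BH)
    (hGiso : ∀ v : V, ∃ u, G.Adj v u) (hHiso : ∀ v : W, ∃ u, H.Adj v u)
    (hcond : (1 : ℚ) / ((maxDeg G : ℚ) + maxDeg H + 1) ≥
      ((AG.card : ℚ) / ((AG.card : ℚ) + BG.card)) *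
        ((AH.card : ℚ) / ((AH.card : ℚ) + BH.card))) :
    domNum (G □ H) ≥ domNum G * domNum H := by
  classical
  by_cases hV : Fintype.card V = 0
  · rw [aux_domNum_zero G (Fintype.card_eq_zero_iff.mp hV)]; simp
  by_cases hW : Fintype.card W = 0
  · rw [aux_domNum_zero H (Fintype.card_eq_zero_iff.mp hW)]; simp
  have hABG : AG.card + BG.card = Fintype.card V := by
    have hu : AG ∪ BG = Finset.univ :=
      Finset.eq_univ_of_forall fun v => Finset.mem_union.2 (hGbip.2.1 v)
    rw [← Finset.card_union_of_disjoint hGbip.1, hu, Finset.card_univ]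
  have hABH : AH.card + BH.card = Fintype.card W := by
    have hu : AH ∪ BH = Finset.univ :=
      Finset.eq_univ_of_forall fun v => Finset.mem_union.2 (hHbip.2.1 v)
    rw [← Finset.card_union_of_disjoint hHbip.1, hu, Finset.card_univ]
  have hnG : (0:ℚ) < (AG.card : ℚ) + BG.card := by
    have : 0 < AG.card + BG.card := by omega
    exact_mod_cast this
  have hnH : (0:ℚ) < (AH.card : ℚ) + BH.card := by
    have : 0 < AH.card + BH.card := by omega
    exact_mod_cast this
  rw [ge_iff_le, div_mul_div_comm, div_le_div_iff₀ (by positivity) (by positivity)] at hcond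
  have hkey : (maxDeg G + maxDeg H + 1) * (AG.card * AH.card) ≤
      (AG.card + BG.card) * (AH.card + BH.card) := by
    have hq : ((maxDeg G + maxDeg H + 1) * (AG.card * AH.card) : ℚ) ≤
        (((AG.card : ℚ) + BG.card) * ((AH.card : ℚ) + BH.card)) := by
      push_cast
      nlinarith [hcond]
    exact_mod_cast hq
  rw [hABG, hABH] at hkey
  have hbox := aux_card_le_domNum_mul (G □ H)
  rw [Fintype.card_prod] at hbox
  have hmd : maxDeg (G □ H) ≤ maxDeg G + maxDeg H := aux_maxDeg_boxProd G H
  have h4 : (maxDeg G + maxDeg H + 1) * (AG.card * AH.card) ≤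
      (maxDeg G + maxDeg H + 1) * domNum (G □ H) := by
    calc (maxDeg G + maxDeg H + 1) * (AG.card * AH.card)
        ≤ Fintype.card V * Fintype.card W := hkey
      _ ≤ domNum (G □ H) * (maxDeg (G □ H) + 1) := hbox
      _ ≤ domNum (G □ H) * (maxDeg G + maxDeg H + 1) :=
          Nat.mul_le_mul_left _ (by omega)
      _ = (maxDeg G + maxDeg H + 1) * domNum (G □ H) := mul_comm _ _
  have h5 : AG.card * AH.card ≤ domNum (G □ H) :=
    Nat.le_of_mul_le_mul_left h4 (Nat.succ_pos _)
  calc domNum G * domNum H ≤ AG.card * AH.card :=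
        Nat.mul_le_mul (aux_domNum_le_card G AG BG hGbip hGiso)
          (aux_domNum_le_card H AH BH hHbip hHiso)
    _ ≤ domNum (G □ H) := h5
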